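/- arXiv:1404.1902 — 9 statements merged into one kernel-verified Lean document; each statement's English description precedes it below -/
import Mathlib

section
/- The function u(t,x) = 27 / (x³(ln x − 3t)³) satisfies the generalized Kompaneets equation u_t = x²u_{xx} + 4x(⅓x·u^{1/3} + 1)u_x + 4x·u^{4/3} on any open subset of ℝ₊ × ℝ₊ where ln x − 3t > 0. -/
open Real Filter

private lemma hasDerivAt_u (t y : ℝ) (hy : 0 < y) (hM : Real.log y - 3 * t ≠ 0) :
    HasDerivAt (fun y : ℝ => 27 / (y ^ 3 * (Real.log y - 3 * t) ^ 3))
      (-81 / (y ^ 4 * (Real.log y - 3 * t) ^ 3)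
        - 81 / (y ^ 4 * (Real.log y - 3 * t) ^ 4)) y := by
  have hMfun : HasDerivAt (fun y : ℝ => Real.log y - 3 * t) (1 / y) y := by
    simpa [one_div] using (Real.hasDerivAt_log hy.ne').sub_const (3 * t)
  have hM3 : HasDerivAt (fun y : ℝ => (Real.log y - 3 * t) ^ 3)
      (3 * (Real.log y - 3 * t) ^ 2 * (1 / y)) y := by
    simpa using hMfun.fun_pow 3
  have hy3 : HasDerivAt (fun y : ℝ => y ^ 3) (3 * y ^ 2) y := by
    simpa using hasDerivAt_pow 3 y
  have hD : HasDerivAt (fun y : ℝ => y ^ 3 * (Real.log y - 3 * t) ^ 3)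
      (3 * y ^ 2 * (Real.log y - 3 * t) ^ 3
        + y ^ 3 * (3 * (Real.log y - 3 * t) ^ 2 * (1 / y))) y := hy3.mul hM3
  have hne : y ^ 3 * (Real.log y - 3 * t) ^ 3 ≠ 0 :=
    mul_ne_zero (pow_ne_zero _ hy.ne') (pow_ne_zero _ hM)
  have := (hasDerivAt_const y (27 : ℝ)).fun_div hD hne
  refine this.congr_deriv ?_
  field_simp
  ring

private lemma hasDerivAt_g (t y : ℝ) (hy : 0 < y) (hM : Real.log y - 3 * t ≠ 0) :
    HasDerivAt (fun y : ℝ => -81 / (y ^ 4 * (Real.log y - 3 * t) ^ 3)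
        - 81 / (y ^ 4 * (Real.log y - 3 * t) ^ 4))
      (81 * (4 * (Real.log y - 3 * t) + 3) / (y ^ 5 * (Real.log y - 3 * t) ^ 4)
        + 81 * (4 * (Real.log y - 3 * t) + 4) / (y ^ 5 * (Real.log y - 3 * t) ^ 5)) y := by
  have hMfun : HasDerivAt (fun y : ℝ => Real.log y - 3 * t) (1 / y) y := by
    simpa [one_div] using (Real.hasDerivAt_log hy.ne').sub_const (3 * t)
  have hM3 : HasDerivAt (fun y : ℝ => (Real.log y - 3 * t) ^ 3)
      (3 * (Real.log y - 3 * t) ^ 2 * (1 / y)) y := by simpa using hMfun.fun_pow 3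
  have hM4 : HasDerivAt (fun y : ℝ => (Real.log y - 3 * t) ^ 4)
      (4 * (Real.log y - 3 * t) ^ 3 * (1 / y)) y := by simpa using hMfun.fun_pow 4
  have hy4 : HasDerivAt (fun y : ℝ => y ^ 4) (4 * y ^ 3) y := by
    simpa using hasDerivAt_pow 4 y
  have hD1 : HasDerivAt (fun y : ℝ => y ^ 4 * (Real.log y - 3 * t) ^ 3)
      (4 * y ^ 3 * (Real.log y - 3 * t) ^ 3
        + y ^ 4 * (3 * (Real.log y - 3 * t) ^ 2 * (1 / y))) y := hy4.mul hM3
  have hD2 : HasDerivAt (fun y : ℝ => y ^ 4 * (Real.log y - 3 * t) ^ 4)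
      (4 * y ^ 3 * (Real.log y - 3 * t) ^ 4
        + y ^ 4 * (4 * (Real.log y - 3 * t) ^ 3 * (1 / y))) y := hy4.mul hM4
  have hne1 : y ^ 4 * (Real.log y - 3 * t) ^ 3 ≠ 0 :=
    mul_ne_zero (pow_ne_zero _ hy.ne') (pow_ne_zero _ hM)
  have hne2 : y ^ 4 * (Real.log y - 3 * t) ^ 4 ≠ 0 :=
    mul_ne_zero (pow_ne_zero _ hy.ne') (pow_ne_zero _ hM)
  have := ((hasDerivAt_const y (-81 : ℝ)).fun_div hD1 hne1).fun_sub
    ((hasDerivAt_const y (81 : ℝ)).fun_div hD2 hne2)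
  refine this.congr_deriv ?_
  field_simp
  ring

/-- `u(t,x) = 27/(x³(ln x − 3t)³)` satisfies the generalized Kompaneets
equation `u_t = x²u_{xx} + 4x(⅓x·u^{1/3} + 1)u_x + 4x·u^{4/3}` wherever
`t > 0`, `x > 0` and `ln x − 3t > 0`. -/
theorem stmt_1 (t x : ℝ) (ht : 0 < t) (hx : 0 < x) (h : 0 < Real.log x - 3 * t) :
    deriv (fun s : ℝ => 27 / (x ^ 3 * (Real.log x - 3 * s) ^ 3)) t =
      x ^ 2 * deriv (deriv (fun y : ℝ => 27 / (y ^ 3 * (Real.log y - 3 * t) ^ 3))) x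
      + 4 * x * ((1 / 3) * x * (27 / (x ^ 3 * (Real.log x - 3 * t) ^ 3)) ^ ((1 : ℝ) / 3) + 1)
          * deriv (fun y : ℝ => 27 / (y ^ 3 * (Real.log y - 3 * t) ^ 3)) x
      + 4 * x * (27 / (x ^ 3 * (Real.log x - 3 * t) ^ 3)) ^ ((4 : ℝ) / 3) := by
  set L := Real.log x - 3 * t with hL
  have hLne : L ≠ 0 := h.ne'
  have hxne : x ≠ 0 := hx.ne'
  -- time derivative
  have hT : HasDerivAt (fun s : ℝ => 27 / (x ^ 3 * (Real.log x - 3 * s) ^ 3))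
      (243 / (x ^ 3 * L ^ 4)) t := by
    have hMfun : HasDerivAt (fun s : ℝ => Real.log x - 3 * s) (-3) t := by
      simpa using (hasDerivAt_const t (Real.log x)).fun_sub ((hasDerivAt_id t).const_mul 3)
    have hM3 : HasDerivAt (fun s : ℝ => (Real.log x - 3 * s) ^ 3)
        (3 * (Real.log x - 3 * t) ^ 2 * (-3)) t := by simpa using hMfun.fun_pow 3
    have hD : HasDerivAt (fun s : ℝ => x ^ 3 * (Real.log x - 3 * s) ^ 3)
        (x ^ 3 * (3 * (Real.log x - 3 * t) ^ 2 * (-3))) t := hM3.const_mul _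
    have hne : x ^ 3 * (Real.log x - 3 * t) ^ 3 ≠ 0 :=
      mul_ne_zero (pow_ne_zero _ hxne) (pow_ne_zero _ hLne)
    have := (hasDerivAt_const t (27 : ℝ)).fun_div hD hne
    refine this.congr_deriv ?_
    rw [hL]
    field_simp
    ring
  -- first space derivative
  have hU := hasDerivAt_u t x hx hLne
  -- eventually, deriv u = g
  have hev : deriv (fun y : ℝ => 27 / (y ^ 3 * (Real.log y - 3 * t) ^ 3)) =ᶠ[nhds x]
      (fun y : ℝ => -81 / (y ^ 4 * (Real.log y - 3 * t) ^ 3)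
        - 81 / (y ^ 4 * (Real.log y - 3 * t) ^ 4)) := by
    have h1 : ∀ᶠ y in nhds x, 0 < y := eventually_gt_nhds hx
    have hcont : ContinuousAt (fun y : ℝ => Real.log y - 3 * t) x :=
      (Real.continuousAt_log hxne).sub continuousAt_const
    have h2 : ∀ᶠ y in nhds x, 0 < Real.log y - 3 * t :=
      hcont.eventually (eventually_gt_nhds h)
    filter_upwards [h1, h2] with y hy hMy
    exact (hasDerivAt_u t y hy hMy.ne').deriv
  have hG := hasDerivAt_g t x hx hLne
  have hdd : deriv (deriv (fun y : ℝ => 27 / (y ^ 3 * (Real.log y - 3 * t) ^ 3))) x =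
      81 * (4 * L + 3) / (x ^ 5 * L ^ 4) + 81 * (4 * L + 4) / (x ^ 5 * L ^ 5) := by
    rw [hev.deriv_eq]
    exact hG.deriv
  rw [hT.deriv, hU.deriv, hdd]
  -- rpow simplifications
  have hb : (0 : ℝ) < 3 / (x * L) := by positivity
  have hbase : 27 / (x ^ 3 * L ^ 3) = (3 / (x * L)) ^ (3 : ℕ) := by
    field_simp; ring
  have h13 : (27 / (x ^ 3 * L ^ 3)) ^ ((1 : ℝ) / 3) = 3 / (x * L) := by
    rw [hbase, ← Real.rpow_natCast (3 / (x * L)) 3, ← Real.rpow_mul hb.le]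
    norm_num
  have h43 : (27 / (x ^ 3 * L ^ 3)) ^ ((4 : ℝ) / 3) = (3 / (x * L)) ^ (4 : ℕ) := by
    rw [hbase, ← Real.rpow_natCast (3 / (x * L)) 3, ← Real.rpow_mul hb.le]
    norm_num
  rw [h13, h43]
  rw [← hL]
  field_simp
  ring
end

section
/- For any real constant c, the function u(t,x) = 1 / (x³(1 − c·(x^{-1}e^{2t})^{1/3})³) satisfies the generalized Kompaneets equation u_t = x²u_{xx} + 4x(⅓x·u^{1/3} + 1)u_x + 4x·u^{4/3} on any open subset of ℝ₊ × ℝ₊ where 1 − c·(x^{-1}e^{2t})^{1/3} > 0. -/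
open Real

lemma cube13 (z : ℝ) (hz : 0 < z) : (z ^ 3) ^ ((1:ℝ)/3) = z := by
  rw [← Real.rpow_natCast z 3, ← Real.rpow_mul hz.le]
  norm_num

lemma cube43 (z : ℝ) (hz : 0 < z) : (z ^ 3) ^ ((4:ℝ)/3) = z ^ 4 := by
  rw [← Real.rpow_natCast z 3, ← Real.rpow_mul hz.le, ← Real.rpow_natCast z 4]
  norm_num

lemma rpow13_deriv (x t : ℝ) (hx : 0 < x) :
    HasDerivAt (fun s : ℝ => (x⁻¹ * Real.exp (2 * s)) ^ ((1:ℝ)/3))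
      ((2:ℝ)/3 * (x⁻¹ * Real.exp (2*t)) ^ ((1:ℝ)/3)) t := by
  have hM : 0 < x⁻¹ * Real.exp (2*t) := by positivity
  have h1 : HasDerivAt (fun s : ℝ => x⁻¹ * Real.exp (2 * s)) (x⁻¹ * (Real.exp (2*t) * 2)) t := by
    simpa using (((hasDerivAt_id t).const_mul 2).exp).const_mul x⁻¹
  have h2 := h1.rpow_const (p := (1:ℝ)/3) (Or.inl hM.ne')
  convert h2 using 1
  rw [Real.rpow_sub hM, Real.rpow_one]
  field_simp

lemma tderiv (c x t : ℝ) (hx : 0 < x)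
    (h : 0 < 1 - c * (x⁻¹ * Real.exp (2*t)) ^ ((1:ℝ)/3)) :
    deriv (fun s : ℝ => 1 / (x ^ 3 * (1 - c * (x⁻¹ * Real.exp (2 * s)) ^ ((1:ℝ)/3)) ^ 3)) t
    = 2 * c * (x⁻¹ * Real.exp (2*t)) ^ ((1:ℝ)/3)
        / (x ^ 3 * (1 - c * (x⁻¹ * Real.exp (2*t)) ^ ((1:ℝ)/3)) ^ 4) := by
  set R := (x⁻¹ * Real.exp (2*t)) ^ ((1:ℝ)/3) with hR
  have h3 : HasDerivAt (fun s : ℝ => x ^ 3 * (1 - c * (x⁻¹ * Real.exp (2 * s)) ^ ((1:ℝ)/3)) ^ 3)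
      (x ^ 3 * ((3:ℕ) * (1 - c * R) ^ 2 * (-(c * ((2:ℝ)/3 * R))))) t := by
    exact ((((rpow13_deriv x t hx).const_mul c).const_sub 1).pow 3).const_mul (x ^ 3)
  have hD : x ^ 3 * (1 - c * R) ^ 3 ≠ 0 := by positivity
  have h4 := h3.inv hD
  have h5 : deriv (fun s : ℝ =>
      (x ^ 3 * (1 - c * (x⁻¹ * Real.exp (2 * s)) ^ ((1:ℝ)/3)) ^ 3)⁻¹) t
      = -(x ^ 3 * ((3:ℕ) * (1 - c * R) ^ 2 * (-(c * ((2:ℝ)/3 * R)))))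
        / (x ^ 3 * (1 - c * R) ^ 3) ^ 2 := h4.deriv
  have heq : (fun s : ℝ =>
      1 / (x ^ 3 * (1 - c * (x⁻¹ * Real.exp (2 * s)) ^ ((1:ℝ)/3)) ^ 3))
      = (fun s : ℝ =>
      (x ^ 3 * (1 - c * (x⁻¹ * Real.exp (2 * s)) ^ ((1:ℝ)/3)) ^ 3)⁻¹) := by
    funext s; rw [one_div]
  rw [heq, h5]
  have hxne : x ≠ 0 := hx.ne'
  have hvne : 1 - c * R ≠ 0 := h.ne'
  field_simp
  ring

noncomputable def Wk (a y : ℝ) : ℝ := y - a * y ^ ((2:ℝ)/3)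
noncomputable def Pk (a y : ℝ) : ℝ := 1 - a * ((2:ℝ)/3 * y ^ ((2:ℝ)/3 - 1))
noncomputable def Pk' (a y : ℝ) : ℝ :=
  -(a * ((2:ℝ)/3 * (((2:ℝ)/3 - 1) * y ^ ((2:ℝ)/3 - 1 - 1))))

lemma fun_eq (c E : ℝ) (hE : 0 < E) (y : ℝ) (hy : 0 < y) :
    y ^ 3 * (1 - c * (y⁻¹ * E) ^ ((1:ℝ)/3)) ^ 3 = Wk (c * E ^ ((1:ℝ)/3)) y ^ 3 := by
  rw [Wk, ← mul_pow]
  congr 1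
  have h1 : (y⁻¹ * E) ^ ((1:ℝ)/3) = (y ^ ((1:ℝ)/3))⁻¹ * E ^ ((1:ℝ)/3) := by
    rw [Real.mul_rpow (by positivity) hE.le, Real.inv_rpow hy.le]
  have h2 : y ^ ((2:ℝ)/3) * y ^ ((1:ℝ)/3) = y := by
    rw [← Real.rpow_add hy]; norm_num
  have hy13 : y ^ ((1:ℝ)/3) ≠ 0 := by positivity
  rw [h1]
  field_simp
  linear_combination (c * E ^ ((1:ℝ)/3)) * h2

lemma w_deriv (a y : ℝ) (hy : 0 < y) :
    HasDerivAt (fun z : ℝ => Wk a z) (Pk a y) y := by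
  unfold Wk Pk
  exact (hasDerivAt_id' y).sub
    ((Real.hasDerivAt_rpow_const (p := (2:ℝ)/3) (Or.inl hy.ne')).const_mul a)

lemma g_deriv (a y : ℝ) (hy : 0 < y) (hw : Wk a y ≠ 0) :
    HasDerivAt (fun z : ℝ => (Wk a z ^ 3)⁻¹)
      (-(3 * Wk a y ^ 2 * Pk a y) / (Wk a y ^ 3) ^ 2) y := by
  have := ((w_deriv a y hy).fun_pow 3).fun_inv (pow_ne_zero 3 hw)
  refine this.congr_deriv ?_
  push_cast
  ring

lemma p_deriv (a y : ℝ) (hy : 0 < y) :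
    HasDerivAt (fun z : ℝ => Pk a z) (Pk' a y) y := by
  unfold Pk Pk'
  simpa using (((Real.hasDerivAt_rpow_const (p := (2:ℝ)/3 - 1)
    (Or.inl hy.ne')).const_mul ((2:ℝ)/3)).const_mul a).const_sub 1

lemma G_deriv (a y : ℝ) (hy : 0 < y) (hw : Wk a y ≠ 0) :
    HasDerivAt (fun z : ℝ => -(3 * Wk a z ^ 2 * Pk a z) / (Wk a z ^ 3) ^ 2)
      (((-(3 * (2 * Wk a y * Pk a y) * Pk a y + 3 * Wk a y ^ 2 * Pk' a y))
          * (Wk a y ^ 3) ^ 2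
        - (-(3 * Wk a y ^ 2 * Pk a y)) * (2 * Wk a y ^ 3 * (3 * Wk a y ^ 2 * Pk a y)))
        / ((Wk a y ^ 3) ^ 2) ^ 2) y := by
  have hw' := w_deriv a y hy
  have hp' := p_deriv a y hy
  have hN := (((hw'.fun_pow 2).const_mul 3).fun_mul hp').fun_neg
  have hD := (hw'.fun_pow 3).fun_pow 2
  have hDne : (Wk a y ^ 3) ^ 2 ≠ 0 := pow_ne_zero 2 (pow_ne_zero 3 hw)
  have := hN.fun_div hD hDne
  refine this.congr_deriv ?_
  push_cast
  ring



/-- for any `c`, the function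
`u(t,x) = 1/(x³(1 − c·(x⁻¹e^{2t})^{1/3})³)` satisfies the generalized Kompaneets
equation `u_t = x²u_{xx} + 4x(⅓x·u^{1/3} + 1)u_x + 4x·u^{4/3}` wherever
`t > 0`, `x > 0` and `1 − c·(x⁻¹e^{2t})^{1/3} > 0`. -/
theorem stmt_2 (c : ℝ) (t x : ℝ) (ht : 0 < t) (hx : 0 < x)
    (h : 0 < 1 - c * (x⁻¹ * Real.exp (2 * t)) ^ ((1 : ℝ) / 3)) :
    deriv (fun s : ℝ =>
        1 / (x ^ 3 * (1 - c * (x⁻¹ * Real.exp (2 * s)) ^ ((1 : ℝ) / 3)) ^ 3)) t =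
      x ^ 2 * deriv (deriv (fun y : ℝ =>
          1 / (y ^ 3 * (1 - c * (y⁻¹ * Real.exp (2 * t)) ^ ((1 : ℝ) / 3)) ^ 3))) x
      + 4 * x * ((1 / 3) * x
            * (1 / (x ^ 3 * (1 - c * (x⁻¹ * Real.exp (2 * t)) ^ ((1 : ℝ) / 3)) ^ 3))
              ^ ((1 : ℝ) / 3) + 1)
          * deriv (fun y : ℝ =>
              1 / (y ^ 3 * (1 - c * (y⁻¹ * Real.exp (2 * t)) ^ ((1 : ℝ) / 3)) ^ 3)) x
      + 4 * x * (1 / (x ^ 3 * (1 - c * (x⁻¹ * Real.exp (2 * t)) ^ ((1 : ℝ) / 3)) ^ 3))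
            ^ ((4 : ℝ) / 3) := by
  set E := Real.exp (2 * t) with hEdef
  have hE : 0 < E := Real.exp_pos _
  set a := c * E ^ ((1:ℝ)/3) with hadef
  set R := (x⁻¹ * E) ^ ((1:ℝ)/3) with hRdef
  have hR : 0 < R := by rw [hRdef]; positivity
  -- f and g
  set f : ℝ → ℝ := fun y : ℝ =>
      1 / (y ^ 3 * (1 - c * (y⁻¹ * E) ^ ((1 : ℝ) / 3)) ^ 3) with hfdef
  set g : ℝ → ℝ := fun z : ℝ => (Wk a z ^ 3)⁻¹ with hgdef
  have hfg : ∀ y : ℝ, 0 < y → f y = g y := by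
    intro y hy
    show 1 / (y ^ 3 * (1 - c * (y⁻¹ * E) ^ ((1:ℝ)/3)) ^ 3) = (Wk a y ^ 3)⁻¹
    rw [one_div (y ^ 3 * (1 - c * (y⁻¹ * E) ^ ((1:ℝ)/3)) ^ 3)]
    rw [fun_eq c E hE y hy, hadef]
  -- positivity of W at x
  have hWx : 0 < Wk a x := by
    have h1 : 0 < x ^ 3 * (1 - c * (x⁻¹ * E) ^ ((1:ℝ)/3)) ^ 3 := by positivity
    rw [fun_eq c E hE x hx, ← hadef] at h1
    nlinarith [sq_nonneg (Wk a x)]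
  -- deriv f = G on the open positivity set
  have key : ∀ y : ℝ, 0 < y → 0 < Wk a y →
      deriv f y = -(3 * Wk a y ^ 2 * Pk a y) / (Wk a y ^ 3) ^ 2 := by
    intro y hy hWy
    have hev : f =ᶠ[nhds y] g := by
      filter_upwards [eventually_gt_nhds hy] with z hz using hfg z hz
    rw [hev.deriv_eq]
    exact (g_deriv a y hy hWy.ne').deriv
  have hdf : deriv f x = -(3 * Wk a x ^ 2 * Pk a x) / (Wk a x ^ 3) ^ 2 := key x hx hWx
  -- second derivative
  have hWcont : ContinuousAt (Wk a) x := (w_deriv a x hx).continuousAt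
  have hevW : ∀ᶠ y in nhds x, 0 < Wk a y := by
    have : Set.Ioi (0:ℝ) ∈ nhds (Wk a x) := Ioi_mem_nhds hWx
    exact hWcont this
  have hevG : deriv f =ᶠ[nhds x] (fun z : ℝ => -(3 * Wk a z ^ 2 * Pk a z) / (Wk a z ^ 3) ^ 2) := by
    filter_upwards [eventually_gt_nhds hx, hevW] with z hz hWz using key z hz hWz
  have hddf : deriv (deriv f) x =
      ((-(3 * (2 * Wk a x * Pk a x) * Pk a x + 3 * Wk a x ^ 2 * Pk' a x))
          * (Wk a x ^ 3) ^ 2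
        - (-(3 * Wk a x ^ 2 * Pk a x)) * (2 * Wk a x ^ 3 * (3 * Wk a x ^ 2 * Pk a x)))
        / ((Wk a x ^ 3) ^ 2) ^ 2 := by
    rw [hevG.deriv_eq]
    exact (G_deriv a x hx hWx.ne').deriv
  -- time derivative
  have hlhs := tderiv c x t hx h
  -- algebraic reductions
  have hX : (0:ℝ) < x ^ ((1:ℝ)/3) := by positivity
  set X := x ^ ((1:ℝ)/3) with hXdef
  have hX3 : X ^ 3 = x := by
    rw [hXdef, ← Real.rpow_natCast (x ^ ((1:ℝ)/3)) 3, ← Real.rpow_mul hx.le]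
    norm_num
  have hx23 : x ^ ((2:ℝ)/3) = X ^ 2 := by
    rw [hXdef, ← Real.rpow_natCast (x ^ ((1:ℝ)/3)) 2, ← Real.rpow_mul hx.le]
    norm_num
  have hXne : X ≠ 0 := hX.ne'
  have hx231 : x ^ ((2:ℝ)/3 - 1) = X⁻¹ := by
    rw [Real.rpow_sub hx, Real.rpow_one, hx23, ← hX3]
    field_simp
  have hx2311 : x ^ ((2:ℝ)/3 - 1 - 1) = X⁻¹ / x := by
    rw [Real.rpow_sub hx, Real.rpow_one, hx231]
  have hE13 : E ^ ((1:ℝ)/3) = R * X := by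
    rw [hRdef, hXdef, ← Real.mul_rpow (by positivity) hx.le]
    rw [inv_mul_eq_div, div_mul_cancel₀ _ hx.ne']
  have haRX : a = c * (R * X) := by rw [hadef, hE13]
  -- rewrite W, P, P' at x
  have hWval : Wk a x = x * (1 - c * R) := by
    rw [Wk, haRX, hx23]
    linear_combination (-(c*R)) * hX3
  have hPval : Pk a x = 1 - (2:ℝ)/3 * (c * R) := by
    rw [Pk, haRX, hx231]
    field_simp
  have hPval' : Pk' a x = (2:ℝ)/9 * (c * R) / x := by
    rw [Pk', haRX, hx2311]
    have hxne : x ≠ 0 := hx.ne'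
    field_simp
    ring
  -- u^{1/3}, u^{4/3}
  have hvpos : 0 < 1 - c * R := h
  have hz : (0:ℝ) < (x * (1 - c * R))⁻¹ := by positivity
  have hu3 : 1 / (x ^ 3 * (1 - c * R) ^ 3) = ((x * (1 - c * R))⁻¹) ^ 3 := by
    rw [one_div (x ^ 3 * (1 - c * R) ^ 3), ← mul_pow, ← inv_pow]
  have hu13 : (1 / (x ^ 3 * (1 - c * R) ^ 3)) ^ ((1:ℝ)/3)
      = (x * (1 - c * R))⁻¹ := by
    rw [hu3]; exact cube13 _ hz
  have hu43 : (1 / (x ^ 3 * (1 - c * R) ^ 3)) ^ ((4:ℝ)/3)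
      = ((x * (1 - c * R))⁻¹) ^ 4 := by
    rw [hu3]; exact cube43 _ hz
  -- put everything together
  rw [← hEdef, ← hRdef] at hlhs
  rw [hlhs, hddf, hdf, hu13, hu43, hWval, hPval, hPval']
  have hxne : x ≠ 0 := hx.ne'
  have hvne : 1 - c * R ≠ 0 := hvpos.ne'
  field_simp
  ring
end

section
/- For any real constant c, the function u(t,x) = 1 / (x³(c·(x e^{-4t})^{1/3} − 1)³) satisfies the generalized Kompaneets equation u_t = x²u_{xx} + 4x(⅓x·u^{1/3} + 1)u_x + 4x·u^{4/3} on any open subset of ℝ₊ × ℝ₊ where c·(x e^{-4t})^{1/3} − 1 > 0. -/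
open Real

lemma kom_deriv_aux (c K y : ℝ) (hy : 0 < y)
    (hg : c * y ^ ((1:ℝ)/3) * K - 1 ≠ 0) :
    HasDerivAt (fun z : ℝ => 1 / (z ^ 3 * (c * z ^ ((1:ℝ)/3) * K - 1) ^ 3))
      (-(4 * (c * y ^ ((1:ℝ)/3) * K) - 3) /
        (y ^ 4 * (c * y ^ ((1:ℝ)/3) * K - 1) ^ 4)) y := by
  have hroot : HasDerivAt (fun z : ℝ => z ^ ((1:ℝ)/3)) ((1:ℝ)/3 * y ^ ((1:ℝ)/3 - 1)) y :=
    Real.hasDerivAt_rpow_const (Or.inl hy.ne')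
  have hg1 : HasDerivAt (fun z : ℝ => c * z ^ ((1:ℝ)/3) * K - 1)
      (c * ((1:ℝ)/3 * y ^ ((1:ℝ)/3 - 1)) * K) y :=
    ((hroot.const_mul c).mul_const K).sub_const 1
  have hd := (hasDerivAt_pow 3 y).mul (hg1.pow 3)
  have hD0 : y ^ 3 * (c * y ^ ((1:ℝ)/3) * K - 1) ^ 3 ≠ 0 :=
    mul_ne_zero (pow_ne_zero _ hy.ne') (pow_ne_zero _ hg)
  have H : HasDerivAt (fun z : ℝ => 1 / (z ^ 3 * (c * z ^ ((1:ℝ)/3) * K - 1) ^ 3)) _ y :=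
    (hasDerivAt_const y (1:ℝ)).div hd hD0
  convert H using 1
  have h131 : y ^ ((1:ℝ)/3 - 1) = y ^ ((1:ℝ)/3) / y := by
    rw [Real.rpow_sub hy, Real.rpow_one]
  rw [h131, Pi.pow_apply]
  field_simp
  ring

/-- for any `c`, the function
`u(t,x) = 1/(x³(c·(x e^{−4t})^{1/3} − 1)³)` satisfies the generalized Kompaneets
equation `u_t = x²u_{xx} + 4x(⅓x·u^{1/3} + 1)u_x + 4x·u^{4/3}` wherever
`t > 0`, `x > 0` and `c·(x e^{−4t})^{1/3} − 1 > 0`. -/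
theorem stmt_3 (c : ℝ) (t x : ℝ) (ht : 0 < t) (hx : 0 < x)
    (h : 0 < c * (x * Real.exp (-4 * t)) ^ ((1 : ℝ) / 3) - 1) :
    deriv (fun s : ℝ =>
        1 / (x ^ 3 * (c * (x * Real.exp (-4 * s)) ^ ((1 : ℝ) / 3) - 1) ^ 3)) t =
      x ^ 2 * deriv (deriv (fun y : ℝ =>
          1 / (y ^ 3 * (c * (y * Real.exp (-4 * t)) ^ ((1 : ℝ) / 3) - 1) ^ 3))) x
      + 4 * x * ((1 / 3) * x
            * (1 / (x ^ 3 * (c * (x * Real.exp (-4 * t)) ^ ((1 : ℝ) / 3) - 1) ^ 3))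
              ^ ((1 : ℝ) / 3) + 1)
          * deriv (fun y : ℝ =>
              1 / (y ^ 3 * (c * (y * Real.exp (-4 * t)) ^ ((1 : ℝ) / 3) - 1) ^ 3)) x
      + 4 * x * (1 / (x ^ 3 * (c * (x * Real.exp (-4 * t)) ^ ((1 : ℝ) / 3) - 1) ^ 3))
            ^ ((4 : ℝ) / 3) := by
  have hE : (0:ℝ) < Real.exp (-4 * t) := Real.exp_pos _
  have hX : (0:ℝ) < x * Real.exp (-4 * t) := mul_pos hx hE
  set E : ℝ := Real.exp (-4 * t) with hEdef
  set K : ℝ := E ^ ((1:ℝ)/3) with hKdef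
  set P : ℝ := x ^ ((1:ℝ)/3) with hPdef
  have hKpos : 0 < K := Real.rpow_pos_of_pos hE _
  have hPpos : 0 < P := Real.rpow_pos_of_pos hx _
  have hsplit : (x * E) ^ ((1:ℝ)/3) = P * K := Real.mul_rpow hx.le hE.le
  have hg : 0 < c * P * K - 1 := by
    rw [hsplit, ← mul_assoc] at h; exact h
  set g : ℝ := c * P * K - 1 with hgdef
  -- the u-power identities
  have hxg : (0:ℝ) < x * g := mul_pos hx hg
  have hgoal_g : c * (x * E) ^ ((1:ℝ)/3) - 1 = g := by rw [hsplit, ← mul_assoc]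
  have hu13 : (1 / (x ^ 3 * g ^ 3)) ^ ((1:ℝ)/3) = 1 / (x * g) := by
    rw [one_div, ← mul_pow, ← Real.rpow_natCast (x*g) 3,
      ← Real.rpow_neg hxg.le, ← Real.rpow_mul hxg.le]
    rw [show (-((3:ℕ):ℝ) * (1/3)) = -1 by push_cast; norm_num, Real.rpow_neg_one, one_div]
  have hu43 : (1 / (x ^ 3 * g ^ 3)) ^ ((4:ℝ)/3) = 1 / (x * g) ^ 4 := by
    rw [one_div, ← mul_pow, ← Real.rpow_natCast (x*g) 3,
      ← Real.rpow_neg hxg.le, ← Real.rpow_mul hxg.le]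
    rw [show (-((3:ℕ):ℝ) * (4/3)) = ((-4 : ℤ) : ℝ) by push_cast; norm_num, Real.rpow_intCast,
      zpow_neg, ← one_div]
    norm_num [zpow_ofNat]
  have hgne : c * P * K - 1 ≠ 0 := hg.ne'
  -- rewrite the u-power terms in the goal
  rw [hgoal_g, hu13, hu43]
  -- time derivative
  have hXne : x * Real.exp (-4 * t) ≠ 0 := by positivity
  have hdenne : x ^ 3 * (c * (x * Real.exp (-4 * t)) ^ ((1:ℝ)/3) - 1) ^ 3 ≠ 0 := by
    rw [← hEdef, hgoal_g]
    exact mul_ne_zero (pow_ne_zero _ hx.ne') (pow_ne_zero _ hg.ne')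
  have ha : HasDerivAt (fun s : ℝ => -4 * s) (-4 * 1) t := (hasDerivAt_id t).const_mul (-4)
  have hb := ha.exp
  have hc := hb.const_mul x
  have hd := hc.rpow_const (p := (1:ℝ)/3) (Or.inl hXne)
  have he := (hd.const_mul c).sub_const 1
  have hf := (he.pow 3).const_mul (x ^ 3)
  have hLder : HasDerivAt (fun s : ℝ =>
      1 / (x ^ 3 * (c * (x * Real.exp (-4 * s)) ^ ((1:ℝ)/3) - 1) ^ 3)) _ t :=
    (hasDerivAt_const t (1:ℝ)).div hf hdenne
  have hXE1 : (x * E) ^ ((1:ℝ)/3 - 1) = P * K / (x * E) := by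
    rw [Real.rpow_sub hX, Real.rpow_one, hsplit]
  have hL : deriv (fun s : ℝ =>
      1 / (x ^ 3 * (c * (x * Real.exp (-4 * s)) ^ ((1:ℝ)/3) - 1) ^ 3)) t
      = 4 * c * P * K / (x ^ 3 * g ^ 4) := by
    rw [hLder.deriv, ← hEdef, hXE1, hgoal_g]
    field_simp
    ring
  -- first spatial derivative
  have hev : (fun y : ℝ => 1 / (y ^ 3 * (c * (y * E) ^ ((1:ℝ)/3) - 1) ^ 3))
      =ᶠ[nhds x] (fun y : ℝ => 1 / (y ^ 3 * (c * y ^ ((1:ℝ)/3) * K - 1) ^ 3)) := by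
    filter_upwards [eventually_gt_nhds hx] with y hy
    rw [Real.mul_rpow hy.le hE.le, ← hKdef, ← mul_assoc]
  have hgoalx : deriv (fun y : ℝ =>
      1 / (y ^ 3 * (c * (y * E) ^ ((1:ℝ)/3) - 1) ^ 3)) x
      = -(4 * (c * P * K) - 3) / (x ^ 4 * g ^ 4) := by
    rw [hev.deriv_eq]
    exact (kom_deriv_aux c K x hx hgne).deriv
  rw [hL, hgoalx]
  -- second spatial derivative
  have hcont : ContinuousAt (fun y : ℝ => c * y ^ ((1:ℝ)/3) * K - 1) x := by
    have hr := Real.continuousAt_rpow_const x ((1:ℝ)/3) (Or.inl hx.ne')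
    exact ((continuousAt_const.mul hr).mul continuousAt_const).sub continuousAt_const
  have hgev : ∀ᶠ y in nhds x, 0 < c * y ^ ((1:ℝ)/3) * K - 1 :=
    hcont.eventually (eventually_gt_nhds hg)
  have hev2 : deriv (fun y : ℝ => 1 / (y ^ 3 * (c * (y * E) ^ ((1:ℝ)/3) - 1) ^ 3))
      =ᶠ[nhds x] (fun y : ℝ =>
        -(4 * (c * y ^ ((1:ℝ)/3) * K) - 3) / (y ^ 4 * (c * y ^ ((1:ℝ)/3) * K - 1) ^ 4)) := by
    refine hev.deriv.trans ?_
    filter_upwards [eventually_gt_nhds hx, hgev] with y hy hgy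
    exact (kom_deriv_aux c K y hy hgy.ne').deriv
  have hroot : HasDerivAt (fun z : ℝ => z ^ ((1:ℝ)/3)) ((1:ℝ)/3 * x ^ ((1:ℝ)/3 - 1)) x :=
    Real.hasDerivAt_rpow_const (Or.inl hx.ne')
  have hg1 : HasDerivAt (fun z : ℝ => c * z ^ ((1:ℝ)/3) * K - 1)
      (c * ((1:ℝ)/3 * x ^ ((1:ℝ)/3 - 1)) * K) x :=
    ((hroot.const_mul c).mul_const K).sub_const 1
  have hn : HasDerivAt (fun y : ℝ => -(4 * (c * y ^ ((1:ℝ)/3) * K) - 3))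
      (-(4 * (c * ((1:ℝ)/3 * x ^ ((1:ℝ)/3 - 1)) * K))) x :=
    ((((hroot.const_mul c).mul_const K).const_mul 4).sub_const 3).neg
  have hdd := (hasDerivAt_pow 4 x).mul (hg1.pow 4)
  have hdne : x ^ 4 * (c * x ^ ((1:ℝ)/3) * K - 1) ^ 4 ≠ 0 :=
    mul_ne_zero (pow_ne_zero _ hx.ne') (pow_ne_zero _ hgne)
  have H2 : HasDerivAt (fun y : ℝ =>
      -(4 * (c * y ^ ((1:ℝ)/3) * K) - 3) / (y ^ 4 * (c * y ^ ((1:ℝ)/3) * K - 1) ^ 4)) _ x :=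
    hn.div hdd hdne
  rw [hev2.deriv_eq, H2.deriv]
  -- final algebraic identity
  have h131 : x ^ ((1:ℝ)/3 - 1) = P / x := by
    rw [Real.rpow_sub hx, Real.rpow_one, ← hPdef]
  rw [h131, ← hPdef, hgdef, Pi.pow_apply]
  field_simp
  ring
end

section
/- The vector field X₂ = x∂_x − 3u∂_u is an infinitesimal symmetry of the equation u_t = x²u_{xx} + 4x(⅓x·u^{1/3} + 1)u_x + 4x·u^{4/3} in the following concrete sense: if u(t,x) > 0 solves the equation on an open subset of ℝ₊ × ℝ₊, then for every ε ∈ ℝ the function u_ε(t,x) = e^{-3ε}·u(t, e^{-ε}x) also solves the equation (on the appropriately transformed domain). -/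
/-- the scaling group generated by `X₂ = x∂_x − 3u∂_u` is a symmetry
group of `u_t = x²u_{xx} + 4x(⅓x·u^{1/3} + 1)u_x + 4x·u^{4/3}`: if `u > 0` solves the
equation on an open subset `S` of `ℝ₊ × ℝ₊`, then for every `ε ∈ ℝ` the function
`u_ε(t,x) = e^{−3ε}·u(t, e^{−ε}x)` also solves it on the transformed domain. -/
theorem stmt_13 (S : Set (ℝ × ℝ)) (hS : IsOpen S)
    (hSsub : S ⊆ Set.Ioi (0 : ℝ) ×ˢ Set.Ioi (0 : ℝ))
    (u : ℝ → ℝ → ℝ) (hreg : ContDiffOn ℝ 2 (Function.uncurry u) S)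
    (hpos : ∀ t x : ℝ, (t, x) ∈ S → 0 < u t x)
    (hpde : ∀ t x : ℝ, (t, x) ∈ S →
      deriv (fun s => u s x) t =
        x ^ 2 * deriv (deriv (fun y => u t y)) x
        + 4 * x * ((1 / 3) * x * (u t x) ^ ((1 : ℝ) / 3) + 1) * deriv (fun y => u t y) x
        + 4 * x * (u t x) ^ ((4 : ℝ) / 3)) :
    ∀ ε t x : ℝ, (t, Real.exp (-ε) * x) ∈ S →
      deriv (fun s => Real.exp (-3 * ε) * u s (Real.exp (-ε) * x)) t =
        x ^ 2 * deriv (deriv (fun y => Real.exp (-3 * ε) * u t (Real.exp (-ε) * y))) x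
        + 4 * x * ((1 / 3) * x
              * (Real.exp (-3 * ε) * u t (Real.exp (-ε) * x)) ^ ((1 : ℝ) / 3) + 1)
            * deriv (fun y => Real.exp (-3 * ε) * u t (Real.exp (-ε) * y)) x
        + 4 * x * (Real.exp (-3 * ε) * u t (Real.exp (-ε) * x)) ^ ((4 : ℝ) / 3) := by
  intro ε t x hmem
  set c := Real.exp (-ε) with hc
  set a := Real.exp (-3 * ε) with ha
  have hcpos : 0 < c := Real.exp_pos _
  have hapos : 0 < a := Real.exp_pos _
  have hac : a = c ^ 3 := by
    rw [ha, hc, ← Real.exp_nat_mul]; ring_nf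
  have hupos : 0 < u t (c * x) := hpos _ _ hmem
  set f : ℝ → ℝ := fun y => u t y with hfdef
  set V : Set ℝ := {y | (t, y) ∈ S} with hVdef
  have hVopen : IsOpen V := hS.preimage (by fun_prop : Continuous fun y : ℝ => (t, y))
  have hmemV : c * x ∈ V := hmem
  have hfC2 : ContDiffOn ℝ 2 f V := by
    have h1 : ContDiffOn ℝ 2 (fun y : ℝ => (t, y)) V :=
      (contDiff_const.prodMk contDiff_id).contDiffOn
    exact hreg.comp h1 (fun y hy => hy)
  have hfC1 : ContDiffOn ℝ 1 (deriv f) V := hfC2.deriv_of_isOpen hVopen (by norm_num)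
  have hfd : ∀ y ∈ V, DifferentiableAt ℝ f y := fun y hy =>
    (hfC2.differentiableOn (by norm_num)).differentiableAt (hVopen.mem_nhds hy)
  have hf'd : DifferentiableAt ℝ (deriv f) (c * x) :=
    (hfC1.differentiableOn one_ne_zero).differentiableAt (hVopen.mem_nhds hmemV)
  -- time derivative
  have htime : deriv (fun s => a * u s (c * x)) t = a * deriv (fun s => u s (c * x)) t :=
    deriv_const_mul_field a
  -- spatial first derivative
  have hg : ∀ y : ℝ, c * y ∈ V →
      HasDerivAt (fun z => a * u t (c * z)) (a * (deriv f (c * y) * c)) y := by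
    intro y hy
    have h1 : HasDerivAt (fun z : ℝ => c * z) c y := by
      simpa using (hasDerivAt_id y).const_mul c
    exact ((hfd _ hy).hasDerivAt.comp y h1).const_mul a
  have hev : ∀ᶠ y in nhds x, c * y ∈ V := by
    have : IsOpen {y : ℝ | c * y ∈ V} := hVopen.preimage (continuous_const.mul continuous_id)
    exact this.eventually_mem hmemV
  have hderiv1 : deriv (fun z => a * u t (c * z)) x = a * (deriv f (c * x) * c) :=
    (hg x hmemV).deriv
  -- spatial second derivative
  have hevEq : deriv (fun z => a * u t (c * z)) =ᶠ[nhds x]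
      fun y => a * (deriv f (c * y) * c) := hev.mono fun y hy => (hg y hy).deriv
  have hderiv2 : deriv (deriv (fun z => a * u t (c * z))) x
      = a * (deriv (deriv f) (c * x) * c * c) := by
    rw [hevEq.deriv_eq]
    have h1 : HasDerivAt (fun z : ℝ => c * z) c x := by
      simpa using (hasDerivAt_id x).const_mul c
    have h2 : HasDerivAt (fun y => deriv f (c * y)) (deriv (deriv f) (c * x) * c) x :=
      hf'd.hasDerivAt.comp x h1
    simpa [mul_assoc] using ((h2.mul_const c).const_mul a).deriv
  -- rpow identities
  have h13 : (a * u t (c * x)) ^ ((1 : ℝ) / 3) = c * (u t (c * x)) ^ ((1 : ℝ) / 3) := by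
    rw [Real.mul_rpow hapos.le hupos.le]
    show Real.exp (-3 * ε) ^ ((1:ℝ)/3) * _ = _
    rw [← Real.exp_mul]
    norm_num
    left; rw [hc]; ring_nf
  have h43 : (a * u t (c * x)) ^ ((4 : ℝ) / 3) = c ^ 4 * (u t (c * x)) ^ ((4 : ℝ) / 3) := by
    rw [Real.mul_rpow hapos.le hupos.le]
    show Real.exp (-3 * ε) ^ ((4:ℝ)/3) * _ = _
    rw [← Real.exp_mul, show ((4:ℝ) = ((4:ℕ):ℝ)) by norm_num, ← Real.exp_nat_mul]
    norm_num
    left; ring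
  have h := hpde t (c * x) hmem
  rw [htime, hderiv1, hderiv2, h13, h43, hac]
  have hfd' : deriv (fun y => u t y) = deriv f := rfl
  rw [hfd'] at h
  linear_combination (c : ℝ) ^ 3 * h
end

section
/- The vector field X₁ + 3X₂ generates a symmetry group of the equation u_t = x²u_{xx} + 4x(⅓x·u^{1/3} + 1)u_x + 4x·u^{4/3}: if u(t,x) > 0 solves the equation, then for every ε ∈ ℝ the function u_ε(t,x) = e^{-9ε}·u(t − ε, e^{-3ε}x) also solves it. -/
private lemma deriv_scale (f : ℝ → ℝ) (a x : ℝ) (hf : DifferentiableAt ℝ f (a * x)) :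
    deriv (fun z => f (a * z)) x = a * deriv f (a * x) := by
  have h1 : HasDerivAt (fun z : ℝ => a * z) a x := by
    simpa using (hasDerivAt_id x).const_mul a
  have h := (hf.hasDerivAt.comp x h1)
  exact h.deriv.trans (mul_comm _ _)

/-- the vector field `X₁ + 3X₂`, with flow
`(t,x,u) ↦ (t + ε, e^{3ε}x, e^{−9ε}u)`, generates a symmetry group of
`u_t = x²u_{xx} + 4x(⅓x·u^{1/3} + 1)u_x + 4x·u^{4/3}`: if `u > 0` solves the equation
on an open subset `S` of `ℝ₊ × ℝ₊`, then for every `ε ∈ ℝ` the function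
`u_ε(t,x) = e^{−9ε}·u(t − ε, e^{−3ε}x)` also solves it on the transformed domain. -/
theorem stmt_14 (S : Set (ℝ × ℝ)) (hS : IsOpen S)
    (hSsub : S ⊆ Set.Ioi (0 : ℝ) ×ˢ Set.Ioi (0 : ℝ))
    (u : ℝ → ℝ → ℝ) (hreg : ContDiffOn ℝ 2 (Function.uncurry u) S)
    (hpos : ∀ t x : ℝ, (t, x) ∈ S → 0 < u t x)
    (hpde : ∀ t x : ℝ, (t, x) ∈ S →
      deriv (fun s => u s x) t =
        x ^ 2 * deriv (deriv (fun y => u t y)) x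
        + 4 * x * ((1 / 3) * x * (u t x) ^ ((1 : ℝ) / 3) + 1) * deriv (fun y => u t y) x
        + 4 * x * (u t x) ^ ((4 : ℝ) / 3)) :
    ∀ ε t x : ℝ, (t - ε, Real.exp (-3 * ε) * x) ∈ S →
      deriv (fun s => Real.exp (-9 * ε) * u (s - ε) (Real.exp (-3 * ε) * x)) t =
        x ^ 2 * deriv (deriv (fun y =>
            Real.exp (-9 * ε) * u (t - ε) (Real.exp (-3 * ε) * y))) x
        + 4 * x * ((1 / 3) * x
              * (Real.exp (-9 * ε) * u (t - ε) (Real.exp (-3 * ε) * x)) ^ ((1 : ℝ) / 3) + 1)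
            * deriv (fun y => Real.exp (-9 * ε) * u (t - ε) (Real.exp (-3 * ε) * y)) x
        + 4 * x * (Real.exp (-9 * ε) * u (t - ε) (Real.exp (-3 * ε) * x)) ^ ((4 : ℝ) / 3) := by
  intro ε t x hmem
  set a : ℝ := Real.exp (-3 * ε) with ha
  set c : ℝ := Real.exp (-9 * ε) with hc
  set τ : ℝ := t - ε with hτ
  set g : ℝ → ℝ := fun z => u τ z with hg
  set V : Set ℝ := (fun z => (τ, z)) ⁻¹' S with hV
  have hVopen : IsOpen V := hS.preimage (by fun_prop)
  have haxV : a * x ∈ V := hmem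
  -- g is C² on V
  have hg2 : ContDiffOn ℝ 2 g V :=
    hreg.comp ((contDiff_const.prodMk contDiff_id).contDiffOn) (fun z hz => hz)
  have hgdiff : ∀ z ∈ V, DifferentiableAt ℝ g z := fun z hz =>
    ((hg2.differentiableOn (by norm_num)).differentiableAt (hVopen.mem_nhds hz))
  have hg1 : ContDiffOn ℝ 1 (deriv g) V :=
    hg2.deriv_of_isOpen hVopen (by norm_num)
  have hdgdiff : DifferentiableAt ℝ (deriv g) (a * x) :=
    (hg1.differentiableOn (by norm_num)).differentiableAt (hVopen.mem_nhds haxV)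
  -- time derivative
  have hT : deriv (fun s => c * u (s - ε) (a * x)) t
      = c * deriv (fun s => u s (a * x)) τ := by
    rw [deriv_const_mul_field]
    congr 1
    exact deriv_comp_sub_const (f := fun s => u s (a * x)) (a := ε) (x := t)
  -- first spatial derivative, as a function near x
  have hX1 : ∀ z : ℝ, a * z ∈ V →
      deriv (fun y => c * u τ (a * y)) z = c * a * deriv g (a * z) := by
    intro z hz
    rw [deriv_const_mul_field, deriv_scale g a z (hgdiff _ hz)]
    ring
  -- second spatial derivative
  have hEV : ∀ᶠ z in nhds x, a * z ∈ V := by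
    have : IsOpen {z : ℝ | a * z ∈ V} := hVopen.preimage (by fun_prop)
    exact this.eventually_mem haxV
  have hX2 : deriv (deriv (fun y => c * u τ (a * y))) x
      = c * a * a * deriv (deriv g) (a * x) := by
    have heq : deriv (fun y => c * u τ (a * y)) =ᶠ[nhds x]
        fun z => c * a * deriv g (a * z) := hEV.mono (fun z hz => hX1 z hz)
    rw [heq.deriv_eq, deriv_const_mul_field, deriv_scale (deriv g) a x hdgdiff]
    ring
  have hX1x : deriv (fun y => c * u τ (a * y)) x = c * a * deriv g (a * x) :=
    hX1 x haxV
  -- PDE at the original point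
  have hP := hpde τ (a * x) hmem
  have hU : (0 : ℝ) < u τ (a * x) := hpos τ (a * x) hmem
  -- rpow identities
  have hc13 : c ^ ((1 : ℝ) / 3) = a := by
    rw [ha, hc, ← Real.exp_mul]; ring_nf
  have hc43 : c ^ ((4 : ℝ) / 3) = c * a := by
    rw [ha, hc, ← Real.exp_mul, ← Real.exp_add]; ring_nf
  have hmul13 : (c * u τ (a * x)) ^ ((1 : ℝ) / 3)
      = a * (u τ (a * x)) ^ ((1 : ℝ) / 3) := by
    rw [Real.mul_rpow (Real.exp_nonneg _) hU.le, hc13]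
  have hmul43 : (c * u τ (a * x)) ^ ((4 : ℝ) / 3)
      = c * a * (u τ (a * x)) ^ ((4 : ℝ) / 3) := by
    rw [Real.mul_rpow (Real.exp_nonneg _) hU.le, hc43]
  rw [hT, hX2, hX1x, hmul13, hmul43, hP]
  ring
end

section
/- Suppose u(t,x) is a positive solution of u_t = x²u_{xx} + 4x(⅓x·u^{1/3} + 1)u_x + 4x·u^{4/3} on ℝ₊ × ℝ₊ of the form u(t,x) = x^{-3}·φ(x e^{-2t}) for a twice differentiable positive function φ : ℝ₊ → ℝ₊. Then φ satisfies the generalized Emden–Fowler equation φ''(y) + (4/(3y))·φ(y)^{1/3}·φ'(y) = 0 for all y in the relevant domain. -/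
/-- if `u(t,x) = x⁻³·φ(x e^{−2t})` is a positive solution of
`u_t = x²u_{xx} + 4x(⅓x·u^{1/3} + 1)u_x + 4x·u^{4/3}` on `ℝ₊ × ℝ₊`, with `φ` twice
differentiable and positive on `(0, ∞)`, then `φ` satisfies the generalized
Emden–Fowler equation `φ'' + (4/(3y))·φ^{1/3}·φ' = 0` on `(0, ∞)`. -/
theorem stmt_15 (φ : ℝ → ℝ)
    (hφ : ∀ y : ℝ, 0 < y → DifferentiableAt ℝ φ y ∧ DifferentiableAt ℝ (deriv φ) y)
    (hφpos : ∀ y : ℝ, 0 < y → 0 < φ y)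
    (hpde : ∀ t x : ℝ, 0 < t → 0 < x →
      deriv (fun s => φ (x * Real.exp (-2 * s)) / x ^ 3) t =
        x ^ 2 * deriv (deriv (fun y => φ (y * Real.exp (-2 * t)) / y ^ 3)) x
        + 4 * x * ((1 / 3) * x
              * (φ (x * Real.exp (-2 * t)) / x ^ 3) ^ ((1 : ℝ) / 3) + 1)
            * deriv (fun y => φ (y * Real.exp (-2 * t)) / y ^ 3) x
        + 4 * x * (φ (x * Real.exp (-2 * t)) / x ^ 3) ^ ((4 : ℝ) / 3)) :
    ∀ y : ℝ, 0 < y →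
      deriv (deriv φ) y + (4 / (3 * y)) * (φ y) ^ ((1 : ℝ) / 3) * deriv φ y = 0 := by
  intro y hy
  set c : ℝ := Real.exp (-2 * 1) with hc
  have hcpos : 0 < c := Real.exp_pos _
  set x : ℝ := y / c with hxdef
  have hx : 0 < x := div_pos hy hcpos
  have hxc : x * c = y := div_mul_cancel₀ y hcpos.ne'
  -- derivative of g z = φ (z*c) / z^3 on (0,∞)
  have hg : ∀ z : ℝ, 0 < z →
      HasDerivAt (fun z => φ (z * c) / z ^ 3)
        ((deriv φ (z * c) * c * z ^ 3 - φ (z * c) * (3 * z ^ 2)) / (z ^ 3) ^ 2) z := by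
    intro z hz
    have h1 : HasDerivAt (fun z : ℝ => φ (z * c)) (deriv φ (z * c) * c) z := by
      have hzc : 0 < z * c := mul_pos hz hcpos
      exact ((hφ (z * c) hzc).1.hasDerivAt).comp z (hasDerivAt_mul_const c)
    have h2 : HasDerivAt (fun z : ℝ => z ^ 3) (3 * z ^ 2) z := by
      simpa using hasDerivAt_pow 3 z
    exact h1.div h2 (pow_ne_zero 3 hz.ne')
  have hgd : ∀ z : ℝ, 0 < z →
      deriv (fun z => φ (z * c) / z ^ 3) z =
        deriv φ (z * c) * c * (z ^ 3)⁻¹ - 3 * (φ (z * c) * (z ^ 4)⁻¹) := by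
    intro z hz
    rw [(hg z hz).deriv]
    have h3 : (z:ℝ)^3 ≠ 0 := pow_ne_zero 3 hz.ne'
    have h4 : (z:ℝ)^4 ≠ 0 := pow_ne_zero 4 hz.ne'
    field_simp
  -- second derivative
  have hG : HasDerivAt (fun z => deriv φ (z * c) * c * (z ^ 3)⁻¹ - 3 * (φ (z * c) * (z ^ 4)⁻¹))
      ((deriv (deriv φ) (x * c) * c * c) * (x ^ 3)⁻¹
        + deriv φ (x * c) * c * (-(3 * x ^ 2) / (x ^ 3) ^ 2)
        - 3 * (deriv φ (x * c) * c * (x ^ 4)⁻¹ + φ (x * c) * (-(4 * x ^ 3) / (x ^ 4) ^ 2))) x := by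
    have hyc : 0 < x * c := by rw [hxc]; exact hy
    have h1 : HasDerivAt (fun z : ℝ => deriv φ (z * c)) (deriv (deriv φ) (x * c) * c) x := by
      have h := (hφ (x * c) hyc).2.hasDerivAt
      exact h.comp x (hasDerivAt_mul_const c)
    have h1' : HasDerivAt (fun z : ℝ => φ (z * c)) (deriv φ (x * c) * c) x :=
      ((hφ (x * c) hyc).1.hasDerivAt).comp x (hasDerivAt_mul_const c)
    have h2 : HasDerivAt (fun z : ℝ => (z ^ 3)⁻¹) (-(3 * x ^ 2) / (x ^ 3) ^ 2) x := by
      have := (hasDerivAt_pow 3 x).inv (pow_ne_zero 3 hx.ne')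
      convert this using 2
      · rfl
      · rfl
      · norm_num
      · norm_num
    have h3 : HasDerivAt (fun z : ℝ => (z ^ 4)⁻¹) (-(4 * x ^ 3) / (x ^ 4) ^ 2) x := by
      have := (hasDerivAt_pow 4 x).inv (pow_ne_zero 4 hx.ne')
      convert this using 2
      · rfl
      · rfl
      · norm_num
      · norm_num
    exact ((h1.mul_const c).mul h2).sub (((h1'.mul h3).const_mul 3))
  have hdd : deriv (deriv (fun z => φ (z * c) / z ^ 3)) x =
      (deriv (deriv φ) (x * c) * c * c) * (x ^ 3)⁻¹
        + deriv φ (x * c) * c * (-(3 * x ^ 2) / (x ^ 3) ^ 2)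
        - 3 * (deriv φ (x * c) * c * (x ^ 4)⁻¹ + φ (x * c) * (-(4 * x ^ 3) / (x ^ 4) ^ 2)) := by
    have heq : deriv (fun z => φ (z * c) / z ^ 3) =ᶠ[nhds x]
        (fun z => deriv φ (z * c) * c * (z ^ 3)⁻¹ - 3 * (φ (z * c) * (z ^ 4)⁻¹)) :=
      Filter.eventuallyEq_of_mem (isOpen_Ioi.mem_nhds hx) hgd
    rw [heq.deriv_eq, hG.deriv]
  -- time derivative
  have ht : HasDerivAt (fun s => φ (x * Real.exp (-2 * s)) / x ^ 3)
      (deriv φ (x * c) * (x * (c * -2)) / x ^ 3) 1 := by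
    have hyc : 0 < x * c := by rw [hxc]; exact hy
    have h0 : HasDerivAt (fun s : ℝ => -2 * s) (-2) 1 := by
      simpa using (hasDerivAt_id (1:ℝ)).const_mul (-2)
    have h1 : HasDerivAt (fun s : ℝ => x * Real.exp (-2 * s)) (x * (c * -2)) 1 := by
      have := (h0.exp).const_mul x
      simpa [hc, mul_comm] using this
    exact (((hφ (x * c) hyc).1.hasDerivAt).comp 1 h1).div_const _
  have hpde1 := hpde 1 x one_pos hx
  rw [ht.deriv, hdd, hgd x hx, hxc] at hpde1
  -- rpow simplifications
  have hx3 : ((x:ℝ) ^ 3) ^ ((1:ℝ)/3) = x := by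
    rw [← Real.rpow_natCast x 3, ← Real.rpow_mul hx.le]
    norm_num
  have hx4 : ((x:ℝ) ^ 3) ^ ((4:ℝ)/3) = x ^ 4 := by
    rw [← Real.rpow_natCast x 3, ← Real.rpow_mul hx.le,
      show ((3:ℕ):ℝ) * ((4:ℝ)/3) = ((4:ℕ):ℝ) by norm_num, Real.rpow_natCast]
  have hr1 : (φ y / x ^ 3) ^ ((1:ℝ)/3) = (φ y) ^ ((1:ℝ)/3) / x := by
    rw [Real.div_rpow (hφpos y hy).le (by positivity), hx3]
  have hr2 : (φ y / x ^ 3) ^ ((4:ℝ)/3) = (φ y) ^ ((4:ℝ)/3) / x ^ 4 := by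
    rw [Real.div_rpow (hφpos y hy).le (by positivity), hx4]
  have hr3 : (φ y) ^ ((4:ℝ)/3) = φ y * (φ y) ^ ((1:ℝ)/3) := by
    rw [show (4:ℝ)/3 = 1 + 1/3 by norm_num, Real.rpow_add (hφpos y hy), Real.rpow_one]
  rw [hr1, hr2, hr3] at hpde1
  -- algebra
  have hx0 : (x:ℝ) ≠ 0 := hx.ne'
  have hy0 : (y:ℝ) ≠ 0 := hy.ne'
  have hc0 : c ≠ 0 := hcpos.ne'
  have hyx : y = x * c := hxc.symm
  field_simp at hpde1
  have key : c * x ^ 34 *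
      (3 * deriv (deriv φ) y * (x * c) + 4 * (φ y) ^ ((1:ℝ)/3) * deriv φ y) = 0 := by
    linear_combination (-x ^ 33 : ℝ) * hpde1
  have hcx : c * x ^ 34 ≠ 0 := by positivity
  have hG0 : 3 * deriv (deriv φ) y * (x * c) + 4 * (φ y) ^ ((1:ℝ)/3) * deriv φ y = 0 :=
    (mul_eq_zero.mp key).resolve_left hcx
  rw [show deriv (deriv φ) y + 4 / (3 * y) * φ y ^ ((1:ℝ)/3) * deriv φ y = (3 * deriv (deriv φ) y * (x * c) + 4 * φ y ^ ((1:ℝ)/3) * deriv φ y) / (3 * y) by rw [hxc]; field_simp, hG0, zero_div]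
end

section
/- Suppose u(t,x) is a positive solution of u_t = x²u_{xx} + 4x(⅓x·u^{1/3} + 1)u_x + 4x·u^{4/3} on ℝ₊ × ℝ₊ of the form u(t,x) = x^{-3}·φ(x e^{-4t}) for a twice differentiable positive φ. Then φ satisfies φ''(y) + (2/y)((2/3)φ(y)^{1/3} + 1)φ'(y) = 0. -/
/-- if `u(t,x) = x⁻³·φ(x e^{−4t})` is a positive solution of
`u_t = x²u_{xx} + 4x(⅓x·u^{1/3} + 1)u_x + 4x·u^{4/3}` on `ℝ₊ × ℝ₊`, with `φ` twice
differentiable and positive on `(0, ∞)`, then `φ` satisfies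
`φ'' + (2/y)((2/3)φ^{1/3} + 1)φ' = 0` on `(0, ∞)`. -/
theorem stmt_16 (φ : ℝ → ℝ)
    (hφ : ∀ y : ℝ, 0 < y → DifferentiableAt ℝ φ y ∧ DifferentiableAt ℝ (deriv φ) y)
    (hφpos : ∀ y : ℝ, 0 < y → 0 < φ y)
    (hpde : ∀ t x : ℝ, 0 < t → 0 < x →
      deriv (fun s => φ (x * Real.exp (-4 * s)) / x ^ 3) t =
        x ^ 2 * deriv (deriv (fun y => φ (y * Real.exp (-4 * t)) / y ^ 3)) x
        + 4 * x * ((1 / 3) * x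
              * (φ (x * Real.exp (-4 * t)) / x ^ 3) ^ ((1 : ℝ) / 3) + 1)
            * deriv (fun y => φ (y * Real.exp (-4 * t)) / y ^ 3) x
        + 4 * x * (φ (x * Real.exp (-4 * t)) / x ^ 3) ^ ((4 : ℝ) / 3)) :
    ∀ y : ℝ, 0 < y →
      deriv (deriv φ) y
        + (2 / y) * ((2 / 3) * (φ y) ^ ((1 : ℝ) / 3) + 1) * deriv φ y = 0 := by
  intro y hy
  set c : ℝ := Real.exp (-4 * 1) with hcdef
  have hc : 0 < c := Real.exp_pos _
  set x : ℝ := y / c with hxdef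
  have hx : 0 < x := div_pos hy hc
  have hxc : x * c = y := div_mul_cancel₀ y hc.ne'
  have hyc : 0 < x * c := by rw [hxc]; exact hy
  -- derivative of the inner function at any w > 0
  have hA : ∀ w : ℝ, 0 < w → HasDerivAt (fun z => φ (z * c) / z ^ 3)
      (c * deriv φ (w * c) / w ^ 3 - 3 * φ (w * c) / w ^ 4) w := by
    intro w hw
    have h1 : HasDerivAt (fun z : ℝ => z * c) c w := by
      simpa using (hasDerivAt_id w).mul_const c
    have h2 : HasDerivAt (fun z : ℝ => φ (z * c)) (deriv φ (w * c) * c) w :=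
      ((hφ (w * c) (mul_pos hw hc)).1.hasDerivAt).comp w h1
    have h3 : HasDerivAt (fun z : ℝ => z ^ 3) (3 * w ^ 2) w := by
      simpa using hasDerivAt_pow 3 w
    have h4 := h2.div h3 (pow_ne_zero 3 hw.ne')
    refine h4.congr_deriv ?_
    field_simp
  -- derivative of the derivative formula at x
  have hB : HasDerivAt (fun w => c * deriv φ (w * c) / w ^ 3 - 3 * φ (w * c) / w ^ 4)
      (c ^ 2 * deriv (deriv φ) (x * c) / x ^ 3 - 6 * c * deriv φ (x * c) / x ^ 4
        + 12 * φ (x * c) / x ^ 5) x := by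
    have h1 : HasDerivAt (fun z : ℝ => z * c) c x := by
      simpa using (hasDerivAt_id x).mul_const c
    have h2 : HasDerivAt (fun z : ℝ => deriv φ (z * c)) (deriv (deriv φ) (x * c) * c) x :=
      by have h := (hφ (x * c) hyc).2.hasDerivAt; exact h.comp x h1
    have h2' : HasDerivAt (fun z : ℝ => c * deriv φ (z * c)) (c * (deriv (deriv φ) (x * c) * c)) x :=
      h2.const_mul c
    have h3 : HasDerivAt (fun z : ℝ => z ^ 3) (3 * x ^ 2) x := by
      simpa using hasDerivAt_pow 3 x
    have h4 : HasDerivAt (fun z : ℝ => φ (z * c)) (deriv φ (x * c) * c) x :=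
      ((hφ (x * c) hyc).1.hasDerivAt).comp x h1
    have h4' : HasDerivAt (fun z : ℝ => 3 * φ (z * c)) (3 * (deriv φ (x * c) * c)) x :=
      h4.const_mul 3
    have h5 : HasDerivAt (fun z : ℝ => z ^ 4) (4 * x ^ 3) x := by
      simpa using hasDerivAt_pow 4 x
    have h6 := (h2'.div h3 (pow_ne_zero 3 hx.ne')).sub
      (h4'.div h5 (pow_ne_zero 4 hx.ne'))
    refine h6.congr_deriv ?_
    field_simp
    ring
  -- the time derivative
  have hT : HasDerivAt (fun s => φ (x * Real.exp (-4 * s)) / x ^ 3)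
      (-4 * (x * c) * deriv φ (x * c) / x ^ 3) 1 := by
    have h1 : HasDerivAt (fun s : ℝ => -4 * s) (-4) 1 := by
      simpa using (hasDerivAt_id (1:ℝ)).const_mul (-4)
    have h2 : HasDerivAt (fun s : ℝ => Real.exp (-4 * s)) (Real.exp (-4 * 1) * -4) 1 :=
      (Real.hasDerivAt_exp (-4 * 1)).comp 1 h1
    have h3 : HasDerivAt (fun s : ℝ => x * Real.exp (-4 * s)) (x * (Real.exp (-4 * 1) * -4)) 1 :=
      h2.const_mul x
    have h4 : HasDerivAt (fun s : ℝ => φ (x * Real.exp (-4 * s)))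
        (deriv φ (x * Real.exp (-4 * 1)) * (x * (Real.exp (-4 * 1) * -4))) 1 :=
      ((hφ (x * Real.exp (-4 * 1)) (by rw [← hcdef]; exact hyc)).1.hasDerivAt).comp 1 h3
    have h5 := h4.div_const (x ^ 3)
    rw [← hcdef] at h5
    refine h5.congr_deriv ?_
    ring
  -- the second space derivative
  have hDD : deriv (deriv (fun z => φ (z * c) / z ^ 3)) x =
      c ^ 2 * deriv (deriv φ) (x * c) / x ^ 3 - 6 * c * deriv φ (x * c) / x ^ 4
        + 12 * φ (x * c) / x ^ 5 := by
    have hEq : deriv (fun z => φ (z * c) / z ^ 3)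
        =ᶠ[nhds x] (fun w => c * deriv φ (w * c) / w ^ 3 - 3 * φ (w * c) / w ^ 4) := by
      filter_upwards [eventually_gt_nhds hx] with w hw
      exact (hA w hw).deriv
    rw [hEq.deriv_eq]
    exact hB.deriv
  have E := hpde 1 x one_pos hx
  rw [← hcdef] at E
  rw [hT.deriv, hDD, (hA x hx).deriv, hxc] at E
  -- rpow simplifications
  have hx3 : ((x : ℝ) ^ 3) ^ ((1:ℝ)/3) = x := by
    rw [← Real.rpow_natCast x 3, ← Real.rpow_mul hx.le]
    norm_num
  have hx4 : ((x : ℝ) ^ 3) ^ ((4:ℝ)/3) = x ^ 4 := by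
    rw [← Real.rpow_natCast x 3, ← Real.rpow_mul hx.le]
    norm_num
  have hr1 : (φ y / x ^ 3) ^ ((1:ℝ)/3) = (φ y) ^ ((1:ℝ)/3) / x := by
    rw [Real.div_rpow (hφpos y hy).le (by positivity), hx3]
  have hr2 : (φ y / x ^ 3) ^ ((4:ℝ)/3) = (φ y) * (φ y) ^ ((1:ℝ)/3) / x ^ 4 := by
    rw [Real.div_rpow (hφpos y hy).le (by positivity), hx4,
      show ((4:ℝ)/3) = 1 + (1:ℝ)/3 by norm_num,
      Real.rpow_add (hφpos y hy), Real.rpow_one]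
  rw [hr1, hr2] at E
  -- now pure algebra
  set A := φ y
  set B := deriv φ y
  set C := deriv (deriv φ) y
  set Q := (φ y) ^ ((1:ℝ)/3)
  rw [← hxc] at E ⊢
  clear_value A B C Q
  clear_value c x
  have hxne : x ≠ 0 := hx.ne'
  have hcne : c ≠ 0 := hc.ne'
  field_simp at E ⊢
  have key : C * x * c * 3 + Q * B * 4 + B * 6 = 0 := by
    have h2 : (C * x * c * 3 + Q * B * 4 + B * 6) * (c * x) = 0 := by
      linear_combination -E
    rcases mul_eq_zero.mp h2 with h | h
    · exact h
    · exact absurd h (by positivity)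
  linear_combination key
end

section
/- Suppose u(t,x) is a positive solution of u_t = x²u_{xx} + 4x(⅓x·u^{1/3} + 1)u_x + 4x·u^{4/3} of the form u(t,x) = t^{-3/2}x^{-3}·φ(y) with y = (ln x − 3t)/√t, for a twice differentiable positive φ and t > 0, x > 0. Then φ satisfies φ''(y) + ((4/3)φ(y)^{1/3} + y/2)φ'(y) + (3/2)φ(y) = 0. -/
/-- if `u(t,x) = t^{−3/2}x⁻³·φ((ln x − 3t)/√t)` is a positive solution of
`u_t = x²u_{xx} + 4x(⅓x·u^{1/3} + 1)u_x + 4x·u^{4/3}` on `ℝ₊ × ℝ₊`, with `φ` twice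
differentiable and positive, then `φ` satisfies
`φ'' + ((4/3)φ^{1/3} + y/2)φ' + (3/2)φ = 0`. -/
theorem stmt_17 (φ : ℝ → ℝ)
    (hφ : ∀ y : ℝ, DifferentiableAt ℝ φ y ∧ DifferentiableAt ℝ (deriv φ) y)
    (hφpos : ∀ y : ℝ, 0 < φ y)
    (hpde : ∀ t x : ℝ, 0 < t → 0 < x →
      deriv (fun s => φ ((Real.log x - 3 * s) / Real.sqrt s)
          / (s ^ ((3 : ℝ) / 2) * x ^ 3)) t =
        x ^ 2 * deriv (deriv (fun y => φ ((Real.log y - 3 * t) / Real.sqrt t)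
            / (t ^ ((3 : ℝ) / 2) * y ^ 3))) x
        + 4 * x * ((1 / 3) * x
              * (φ ((Real.log x - 3 * t) / Real.sqrt t)
                  / (t ^ ((3 : ℝ) / 2) * x ^ 3)) ^ ((1 : ℝ) / 3) + 1)
            * deriv (fun y => φ ((Real.log y - 3 * t) / Real.sqrt t)
                / (t ^ ((3 : ℝ) / 2) * y ^ 3)) x
        + 4 * x * (φ ((Real.log x - 3 * t) / Real.sqrt t)
              / (t ^ ((3 : ℝ) / 2) * x ^ 3)) ^ ((4 : ℝ) / 3)) :
    ∀ y : ℝ,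
      deriv (deriv φ) y
        + ((4 / 3) * (φ y) ^ ((1 : ℝ) / 3) + y / 2) * deriv φ y
        + (3 / 2) * φ y = 0 := by
  intro y
  set x : ℝ := Real.exp (y + 3) with hxdef
  have hx : (0:ℝ) < x := Real.exp_pos _
  have hx' : x ≠ 0 := ne_of_gt hx
  have hlx : Real.log x = y + 3 := Real.log_exp _
  have hx3 : x ^ 3 ≠ 0 := pow_ne_zero _ hx'
  -- derivative of the space profile f(z) = φ(log z - 3)/z^3 at any z > 0
  have hfd : ∀ z : ℝ, 0 < z →
      HasDerivAt (fun z : ℝ => φ (Real.log z - 3) / z ^ 3)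
        ((deriv φ (Real.log z - 3) - 3 * φ (Real.log z - 3)) / z ^ 4) z := by
    intro z hz
    have h1 : HasDerivAt (fun z : ℝ => Real.log z - 3) z⁻¹ z :=
      (Real.hasDerivAt_log hz.ne').sub_const 3
    have h2 : HasDerivAt (fun z : ℝ => φ (Real.log z - 3))
        (deriv φ (Real.log z - 3) * z⁻¹) z := by
      have := ((hφ (Real.log z - 3)).1.hasDerivAt).comp z h1
      exact this
    have h3 : HasDerivAt (fun z : ℝ => z ^ 3) (3 * z ^ 2) z := by
      simpa using hasDerivAt_pow 3 z
    have h4 := h2.div h3 (pow_ne_zero _ hz.ne')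
    refine h4.congr_deriv ?_
    field_simp
  -- second derivative
  have hgd : HasDerivAt
      (fun z : ℝ => (deriv φ (Real.log z - 3) - 3 * φ (Real.log z - 3)) / z ^ 4)
      ((deriv (deriv φ) (Real.log x - 3) - 7 * deriv φ (Real.log x - 3)
        + 12 * φ (Real.log x - 3)) / x ^ 5) x := by
    have h1 : HasDerivAt (fun z : ℝ => Real.log z - 3) x⁻¹ x :=
      (Real.hasDerivAt_log hx').sub_const 3
    have h2 : HasDerivAt (fun z : ℝ => φ (Real.log z - 3))
        (deriv φ (Real.log x - 3) * x⁻¹) x := by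
      have := ((hφ (Real.log x - 3)).1.hasDerivAt).comp x h1
      exact this
    have h2' : HasDerivAt (fun z : ℝ => deriv φ (Real.log z - 3))
        (deriv (deriv φ) (Real.log x - 3) * x⁻¹) x := by
      have := ((hφ (Real.log x - 3)).2.hasDerivAt).comp x h1
      exact this
    have hnum : HasDerivAt
        (fun z : ℝ => deriv φ (Real.log z - 3) - 3 * φ (Real.log z - 3))
        (deriv (deriv φ) (Real.log x - 3) * x⁻¹
          - 3 * (deriv φ (Real.log x - 3) * x⁻¹)) x := h2'.sub (h2.const_mul 3)
    have h3 : HasDerivAt (fun z : ℝ => z ^ 4) (4 * x ^ 3) x := by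
      simpa using hasDerivAt_pow 4 x
    have h4 := hnum.div h3 (pow_ne_zero _ hx')
    refine h4.congr_deriv ?_
    field_simp
    ring
  have h2nd : deriv (deriv (fun z : ℝ => φ (Real.log z - 3) / z ^ 3)) x =
      (deriv (deriv φ) (Real.log x - 3) - 7 * deriv φ (Real.log x - 3)
        + 12 * φ (Real.log x - 3)) / x ^ 5 := by
    have hev : deriv (fun z : ℝ => φ (Real.log z - 3) / z ^ 3) =ᶠ[nhds x]
        (fun z : ℝ => (deriv φ (Real.log z - 3) - 3 * φ (Real.log z - 3)) / z ^ 4) := by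
      filter_upwards [eventually_gt_nhds hx] with z hz using (hfd z hz).deriv
    rw [hev.deriv_eq]
    exact hgd.deriv
  -- time derivative at t = 1
  have hpt : (Real.log x - 3 * 1) / Real.sqrt 1 = y := by
    rw [hlx]; simp
  have hw : HasDerivAt (fun s : ℝ => (Real.log x - 3 * s) / Real.sqrt s)
      (-3 - y / 2) 1 := by
    have hnum : HasDerivAt (fun s : ℝ => Real.log x - 3 * s) (-3) 1 := by
      simpa using ((hasDerivAt_id (1:ℝ)).const_mul 3).const_sub (Real.log x)
    have hden : HasDerivAt Real.sqrt (1 / (2 * Real.sqrt 1)) 1 :=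
      Real.hasDerivAt_sqrt one_ne_zero
    have h4 := hnum.div hden (by simp)
    refine h4.congr_deriv ?_
    rw [hlx]
    simp [Real.sqrt_one]
    ring
  have hφy : HasDerivAt φ (deriv φ y) ((Real.log x - 3 * 1) / Real.sqrt 1) := by
    rw [hpt]; exact (hφ y).1.hasDerivAt
  have hcomp : HasDerivAt (fun s : ℝ => φ ((Real.log x - 3 * s) / Real.sqrt s))
      (deriv φ y * (-3 - y / 2)) 1 := by
    have := hφy.comp 1 hw
    exact this
  have hden2 : HasDerivAt (fun s : ℝ => s ^ ((3:ℝ)/2) * x ^ 3)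
      ((3:ℝ)/2 * ((1:ℝ) ^ ((3:ℝ)/2 - 1)) * x ^ 3) 1 :=
    (Real.hasDerivAt_rpow_const (x := (1:ℝ)) (p := (3:ℝ)/2)
      (Or.inl one_ne_zero)).mul_const (x ^ 3)
  have hden2ne : (1:ℝ) ^ ((3:ℝ)/2) * x ^ 3 ≠ 0 := by
    simp [Real.one_rpow, hx3]
  have hF : HasDerivAt (fun s : ℝ => φ ((Real.log x - 3 * s) / Real.sqrt s)
      / (s ^ ((3:ℝ)/2) * x ^ 3))
      ((deriv φ y * (-3 - y / 2) - (3:ℝ)/2 * φ y) / x ^ 3) 1 := by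
    have h4 := hcomp.div hden2 hden2ne
    refine h4.congr_deriv ?_
    rw [hpt]
    rw [Real.one_rpow]
    field_simp
    ring
  -- instantiate the PDE
  have H := hpde 1 x one_pos hx
  simp only [Real.sqrt_one, Real.one_rpow, mul_one, one_mul, div_one] at H
  rw [hF.deriv, (hfd x hx).deriv, h2nd] at H
  have hY : Real.log x - 3 = y := by rw [hlx]; ring
  rw [hY] at H
  -- rpow simplifications
  have hcube : (x ^ 3 : ℝ) ^ ((1:ℝ)/3) = x := by
    rw [← Real.rpow_natCast x 3, ← Real.rpow_mul hx.le]
    norm_num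
  have hcube4 : (x ^ 3 : ℝ) ^ ((4:ℝ)/3) = x ^ 4 := by
    rw [← Real.rpow_natCast x 3, ← Real.rpow_mul hx.le]
    norm_num
  have hr1 : (φ y / x ^ 3) ^ ((1:ℝ)/3) = (φ y) ^ ((1:ℝ)/3) / x := by
    rw [Real.div_rpow (hφpos y).le (by positivity), hcube]
  have hr2 : (φ y / x ^ 3) ^ ((4:ℝ)/3) = (φ y) ^ ((4:ℝ)/3) / x ^ 4 := by
    rw [Real.div_rpow (hφpos y).le (by positivity), hcube4]
  rw [hr1, hr2] at H
  have hab : (φ y) ^ ((1:ℝ)/3) * φ y = (φ y) ^ ((4:ℝ)/3) := by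
    rw [show ((4:ℝ)/3) = (1:ℝ)/3 + 1 by norm_num, Real.rpow_add (hφpos y),
      Real.rpow_one]
  have hRHS : x ^ 2 * ((deriv (deriv φ) y - 7 * deriv φ y + 12 * φ y) / x ^ 5)
      + 4 * x * (1 / 3 * x * ((φ y) ^ ((1:ℝ)/3) / x) + 1)
          * ((deriv φ y - 3 * φ y) / x ^ 4)
      + 4 * x * ((φ y) ^ ((4:ℝ)/3) / x ^ 4)
      = ((deriv (deriv φ) y - 7 * deriv φ y + 12 * φ y)
        + 4 * ((1:ℝ)/3 * (φ y) ^ ((1:ℝ)/3) + 1) * (deriv φ y - 3 * φ y)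
        + 4 * (φ y) ^ ((4:ℝ)/3)) / x ^ 3 := by
    field_simp
  rw [hRHS] at H
  have H2 : deriv φ y * (-3 - y / 2) - (3:ℝ)/2 * φ y =
      (deriv (deriv φ) y - 7 * deriv φ y + 12 * φ y)
      + 4 * ((1:ℝ)/3 * (φ y) ^ ((1:ℝ)/3) + 1) * (deriv φ y - 3 * φ y)
      + 4 * (φ y) ^ ((4:ℝ)/3) := by
    have := congrArg (fun r : ℝ => r * x ^ 3) H
    simpa only [div_mul_cancel₀ _ hx3] using this
  linear_combination -H2 + 4 * hab
end

section
/- For any c₃ > 0, the function φ(y) = 1/(1 − c₃·y^{-1/3})³, defined on the set of y > 0 where 1 − c₃·y^{-1/3} > 0, satisfies the generalized Emden–Fowler equation φ''(y) + (4/(3y))·φ(y)^{1/3}·φ'(y) = 0. -/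
private lemma g_deriv_s19 (c₃ : ℝ) {z : ℝ} (hz : 0 < z) :
    HasDerivAt (fun z : ℝ => 1 - c₃ * z ^ (-(1 : ℝ) / 3)) (c₃ / 3 * z ^ (-(4 : ℝ) / 3)) z := by
  have h := (Real.hasDerivAt_rpow_const (p := -(1:ℝ)/3) (Or.inl hz.ne')).const_mul c₃
  have h2 := h.const_sub 1
  convert! h2 using 1
  ring_nf

private lemma f1_deriv (c₃ : ℝ) {z : ℝ} (hz : 0 < z)
    (hg : 0 < 1 - c₃ * z ^ (-(1 : ℝ) / 3)) :
    HasDerivAt (fun z : ℝ => 1 / (1 - c₃ * z ^ (-(1 : ℝ) / 3)) ^ 3)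
      (-c₃ * z ^ (-(4 : ℝ) / 3) / (1 - c₃ * z ^ (-(1 : ℝ) / 3)) ^ 4) z := by
  set g := 1 - c₃ * z ^ (-(1 : ℝ) / 3) with hgdef
  have hgd := g_deriv_s19 c₃ hz
  have hh : HasDerivAt (fun z : ℝ => (1 - c₃ * z ^ (-(1 : ℝ) / 3)) ^ 3)
      (3 * g ^ 2 * (c₃ / 3 * z ^ (-(4 : ℝ) / 3))) z := by
    simpa using hgd.fun_pow 3
  have hne : g ^ 3 ≠ 0 := pow_ne_zero _ hg.ne'
  have := hh.fun_inv hne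
  have heq : (fun z : ℝ => 1 / (1 - c₃ * z ^ (-(1 : ℝ) / 3)) ^ 3)
      = fun z : ℝ => ((1 - c₃ * z ^ (-(1 : ℝ) / 3)) ^ 3)⁻¹ := by
    funext z; rw [one_div]
  rw [heq]
  convert! this using 1
  rw [← hgdef]
  field_simp

private lemma a4 {y : ℝ} (hy : 0 < y) : y ^ (-(4 : ℝ) / 3) = (y ^ (-(1 : ℝ) / 3)) ^ (4:ℕ) := by
  rw [← Real.rpow_natCast (y ^ (-(1:ℝ)/3)) 4, ← Real.rpow_mul hy.le]
  norm_num

private lemma a7 {y : ℝ} (hy : 0 < y) : y ^ (-(7 : ℝ) / 3) = (y ^ (-(1 : ℝ) / 3)) ^ (7:ℕ) := by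
  rw [← Real.rpow_natCast (y ^ (-(1:ℝ)/3)) 7, ← Real.rpow_mul hy.le]
  norm_num

private lemma a3 {y : ℝ} (hy : 0 < y) : y⁻¹ = (y ^ (-(1 : ℝ) / 3)) ^ (3:ℕ) := by
  rw [← Real.rpow_natCast (y ^ (-(1:ℝ)/3)) 3, ← Real.rpow_mul hy.le]
  norm_num
  exact (Real.rpow_neg_one y).symm

private lemma f2_deriv (c₃ : ℝ) {y : ℝ} (hy : 0 < y)
    (hg : 0 < 1 - c₃ * y ^ (-(1 : ℝ) / 3)) :
    HasDerivAt (fun z : ℝ => -c₃ * z ^ (-(4 : ℝ) / 3) / (1 - c₃ * z ^ (-(1 : ℝ) / 3)) ^ 4)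
      (4 * c₃ / 3 * y ^ (-(7 : ℝ) / 3) / (1 - c₃ * y ^ (-(1 : ℝ) / 3)) ^ 5) y := by
  set a := y ^ (-(1 : ℝ) / 3) with hadef
  have hnum : HasDerivAt (fun z : ℝ => -c₃ * z ^ (-(4 : ℝ) / 3))
      (-c₃ * (-(4:ℝ)/3 * y ^ (-(4:ℝ)/3 - 1))) y :=
    (Real.hasDerivAt_rpow_const (p := -(4:ℝ)/3) (Or.inl hy.ne')).const_mul (-c₃)
  have hgd := g_deriv_s19 c₃ hy
  have hden : HasDerivAt (fun z : ℝ => (1 - c₃ * z ^ (-(1 : ℝ) / 3)) ^ 4)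
      (4 * (1 - c₃ * a) ^ 3 * (c₃ / 3 * y ^ (-(4 : ℝ) / 3))) y := by
    simpa using hgd.fun_pow 4
  have hdne : (1 - c₃ * a) ^ 4 ≠ 0 := pow_ne_zero _ hg.ne'
  have := hnum.fun_div hden hdne
  convert! this using 1
  have h43 : y ^ (-(4:ℝ)/3 - 1) = y ^ (-(7:ℝ)/3) := by norm_num
  rw [h43, a4 hy, a7 hy, ← hadef]
  field_simp
  ring

/-- for any `c₃ > 0`, the function `φ(y) = 1/(1 − c₃·y^{−1/3})³`
satisfies the generalized Emden–Fowler equation `φ'' + (4/(3y))·φ^{1/3}·φ' = 0`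
at every `y > 0` with `1 − c₃·y^{−1/3} > 0`. -/
theorem stmt_19 (c₃ : ℝ) (hc₃ : 0 < c₃) :
    ∀ y : ℝ, 0 < y → 0 < 1 - c₃ * y ^ (-(1 : ℝ) / 3) →
      deriv (deriv (fun z : ℝ => 1 / (1 - c₃ * z ^ (-(1 : ℝ) / 3)) ^ 3)) y
        + (4 / (3 * y))
            * (1 / (1 - c₃ * y ^ (-(1 : ℝ) / 3)) ^ 3) ^ ((1 : ℝ) / 3)
            * deriv (fun z : ℝ => 1 / (1 - c₃ * z ^ (-(1 : ℝ) / 3)) ^ 3) y = 0 := by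
  intro y hy hg
  set a := y ^ (-(1 : ℝ) / 3) with hadef
  -- eventual equality of deriv f with explicit f1
  have hcont : ContinuousAt (fun z : ℝ => 1 - c₃ * z ^ (-(1 : ℝ) / 3)) y := by
    exact (continuousAt_const.sub (continuousAt_const.mul
      (Real.continuousAt_rpow_const _ _ (Or.inl hy.ne'))))
  have hev : ∀ᶠ z in nhds y, 0 < z ∧ 0 < 1 - c₃ * z ^ (-(1 : ℝ) / 3) :=
    (eventually_gt_nhds hy).and (continuousAt_const.eventually_lt hcont hg)
  have hev2 : (deriv (fun z : ℝ => 1 / (1 - c₃ * z ^ (-(1 : ℝ) / 3)) ^ 3))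
      =ᶠ[nhds y] (fun z : ℝ => -c₃ * z ^ (-(4 : ℝ) / 3) / (1 - c₃ * z ^ (-(1 : ℝ) / 3)) ^ 4) := by
    filter_upwards [hev] with z hz
    exact (f1_deriv c₃ hz.1 hz.2).deriv
  have hd2 : deriv (deriv (fun z : ℝ => 1 / (1 - c₃ * z ^ (-(1 : ℝ) / 3)) ^ 3)) y
      = 4 * c₃ / 3 * y ^ (-(7 : ℝ) / 3) / (1 - c₃ * a) ^ 5 := by
    rw [hev2.deriv_eq]
    exact (f2_deriv c₃ hy hg).deriv
  have hd1 : deriv (fun z : ℝ => 1 / (1 - c₃ * z ^ (-(1 : ℝ) / 3)) ^ 3) y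
      = -c₃ * y ^ (-(4 : ℝ) / 3) / (1 - c₃ * a) ^ 4 := (f1_deriv c₃ hy hg).deriv
  rw [hd1, hd2]
  -- cube root of φ
  have hroot : (1 / (1 - c₃ * a) ^ 3) ^ ((1 : ℝ) / 3) = (1 - c₃ * a)⁻¹ := by
    have h1 : (1 : ℝ) / (1 - c₃ * a) ^ 3 = ((1 - c₃ * a)⁻¹) ^ ((3:ℕ):ℝ) := by
      rw [Real.rpow_natCast]; field_simp
    rw [h1, ← Real.rpow_mul (by positivity : (0:ℝ) ≤ (1 - c₃ * a)⁻¹)]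
    norm_num
  rw [hroot, a4 hy, a7 hy, ← hadef]
  have h3 : (4:ℝ) / (3 * y) = 4 / 3 * a ^ (3:ℕ) := by
    rw [div_mul_eq_div_div, div_eq_mul_inv, a3 hy]
  rw [h3]
  have hgne : (1 - c₃ * a) ≠ 0 := hg.ne'
  field_simp
  ring
end
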